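/- Let (u, r, e) be a solution of the Yang monopole equations of motion on an open interval I, with associated position curve x : I → ℝ⁵∖{0}. Then for all t ∈ I, the acceleration satisfies ⟨ẍ(t), x(t)⟩ = 0 and ⟨ẍ(t), ẋ(t)⟩ = 0; in particular the speed |ẋ(t)| is constant on I. -/

import Mathlib

open scoped InnerProductSpace

noncomputable section

/-- The 4×4 matrix `E` (built from the charge vector `e ∈ ℝ³`, with rows
`(0, e¹, e², e³)`, `(−e¹, 0, −e³, e²)`, `(−e², e³, 0, −e¹)`, `(−e³, −e², e¹, 0)`)
applied to `w ∈ ℝ⁴`. -/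
def Eop (e : EuclideanSpace ℝ (Fin 3)) (w : EuclideanSpace ℝ (Fin 4)) :
    EuclideanSpace ℝ (Fin 4) :=
  (WithLp.equiv 2 (Fin 4 → ℝ)).symm
    ![e 0 * w 1 + e 1 * w 2 + e 2 * w 3,
      -(e 0) * w 0 - e 2 * w 2 + e 1 * w 3,
      -(e 1) * w 0 + e 2 * w 1 - e 0 * w 3,
      -(e 2) * w 0 - e 1 * w 1 + e 0 * w 2]

/-- The 3×4 matrix `A` (with rows `A₁ = (−u₂, u₁, u₄, −u₃)/(|u|²+1)`,
`A₂ = (−u₃, −u₄, u₁, u₂)/(|u|²+1)`, `A₃ = (−u₄, u₃, −u₂, u₁)/(|u|²+1)`) applied to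
`w ∈ ℝ⁴`, giving `(⟨A₁, w⟩, ⟨A₂, w⟩, ⟨A₃, w⟩) ∈ ℝ³`. -/
def Aop (u w : EuclideanSpace ℝ (Fin 4)) : EuclideanSpace ℝ (Fin 3) :=
  (‖u‖ ^ 2 + 1)⁻¹ • (WithLp.equiv 2 (Fin 3 → ℝ)).symm
    ![-(u 1) * w 0 + u 0 * w 1 + u 3 * w 2 - u 2 * w 3,
      -(u 2) * w 0 - u 3 * w 1 + u 0 * w 2 + u 1 * w 3,
      -(u 3) * w 0 + u 2 * w 1 - u 1 * w 2 + u 0 * w 3]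

/-- The antisymmetric 3×3 matrix `B` (with rows `(0, −B₃, B₂)`, `(B₃, 0, −B₁)`,
`(−B₂, B₁, 0)`, built from `b = (B₁, B₂, B₃) = A u̇`) applied to `e ∈ ℝ³`. -/
def Bop (b e : EuclideanSpace ℝ (Fin 3)) : EuclideanSpace ℝ (Fin 3) :=
  (WithLp.equiv 2 (Fin 3 → ℝ)).symm
    ![-(b 2) * e 1 + b 1 * e 2,
      b 2 * e 0 - b 0 * e 2,
      -(b 1) * e 0 + b 0 * e 1]

/-- `(u, r, e)` (with derivatives `u', u''`, `r', r''`, `e'`) is a solution of the Yang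
monopole equations of motion on `I` (the Poincaré problem in `ℝ⁵`, in stereographic
coordinates): `u : I → ℝ⁴` and `r : I → (0, ∞)` are twice continuously differentiable,
`e : I → ℝ³` is continuously differentiable, and the three equations of motion hold. -/
def IsYangSolution (I : Set ℝ)
    (u u' u'' : ℝ → EuclideanSpace ℝ (Fin 4))
    (r r' r'' : ℝ → ℝ)
    (e e' : ℝ → EuclideanSpace ℝ (Fin 3)) : Prop :=
  (∀ t ∈ I, HasDerivAt u (u' t) t) ∧ (∀ t ∈ I, HasDerivAt u' (u'' t) t) ∧
  ContinuousOn u'' I ∧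
  (∀ t ∈ I, HasDerivAt r (r' t) t) ∧ (∀ t ∈ I, HasDerivAt r' (r'' t) t) ∧
  ContinuousOn r'' I ∧
  (∀ t ∈ I, HasDerivAt e (e' t) t) ∧ ContinuousOn e' I ∧
  (∀ t ∈ I, 0 < r t) ∧
  (∀ t ∈ I,
    u'' t + (2 * ‖u' t‖ ^ 2 / (‖u t‖ ^ 2 + 1)) • u t
        - (4 * ⟪u t, u' t⟫_ℝ / (‖u t‖ ^ 2 + 1)) • u' t
        + (2 * r' t / r t) • u' t
      = (1 / (2 * r t ^ 2)) • Eop (e t) (u' t)) ∧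
  (∀ t ∈ I, r'' t = 4 * r t * ‖u' t‖ ^ 2 / (‖u t‖ ^ 2 + 1) ^ 2) ∧
  (∀ t ∈ I, e' t = (-2 : ℝ) • Bop (Aop (u t) (u' t)) (e t))

/-- The associated position curve in `ℝ⁵ = ℝ⁴ × ℝ`:
`x = (2 r u/(|u|²+1), r (|u|²−1)/(|u|²+1))`. -/
def yangX (u : EuclideanSpace ℝ (Fin 4)) (r : ℝ) : EuclideanSpace ℝ (Fin 5) :=
  (WithLp.equiv 2 (Fin 5 → ℝ)).symm
    ![2 * r * u 0 / (‖u‖ ^ 2 + 1),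
      2 * r * u 1 / (‖u‖ ^ 2 + 1),
      2 * r * u 2 / (‖u‖ ^ 2 + 1),
      2 * r * u 3 / (‖u‖ ^ 2 + 1),
      r * (‖u‖ ^ 2 - 1) / (‖u‖ ^ 2 + 1)]

/-- The associated vector `L ∈ ℝ⁵ = ℝ⁴ × ℝ`:
`L = ( ((|e|² − 4r²⟨A u̇, e⟩) u + 2r² E u̇)/(2(|u|²+1)),
       2r²⟨A u̇, e⟩/(|u|²+1) + (|e|²/4)(|u|²−1)/(|u|²+1) )`. -/
def yangL (u u' : EuclideanSpace ℝ (Fin 4)) (r : ℝ) (e : EuclideanSpace ℝ (Fin 3)) :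
    EuclideanSpace ℝ (Fin 5) :=
  (WithLp.equiv 2 (Fin 5 → ℝ)).symm
    ![((‖e‖ ^ 2 - 4 * r ^ 2 * ⟪Aop u u', e⟫_ℝ) * u 0 + 2 * r ^ 2 * Eop e u' 0)
        / (2 * (‖u‖ ^ 2 + 1)),
      ((‖e‖ ^ 2 - 4 * r ^ 2 * ⟪Aop u u', e⟫_ℝ) * u 1 + 2 * r ^ 2 * Eop e u' 1)
        / (2 * (‖u‖ ^ 2 + 1)),
      ((‖e‖ ^ 2 - 4 * r ^ 2 * ⟪Aop u u', e⟫_ℝ) * u 2 + 2 * r ^ 2 * Eop e u' 2)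
        / (2 * (‖u‖ ^ 2 + 1)),
      ((‖e‖ ^ 2 - 4 * r ^ 2 * ⟪Aop u u', e⟫_ℝ) * u 3 + 2 * r ^ 2 * Eop e u' 3)
        / (2 * (‖u‖ ^ 2 + 1)),
      2 * r ^ 2 * ⟪Aop u u', e⟫_ℝ / (‖u‖ ^ 2 + 1)
        + (‖e‖ ^ 2 / 4) * (‖u‖ ^ 2 - 1) / (‖u‖ ^ 2 + 1)]



private lemma euclProj {m : ℕ} {f : ℝ → EuclideanSpace ℝ (Fin m)}
    {f' : EuclideanSpace ℝ (Fin m)} {t : ℝ} (h : HasDerivAt f f' t) (i : Fin m) :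
    HasDerivAt (fun s => f s i) (f' i) t := by
  exact (EuclideanSpace.proj (𝕜 := ℝ) i).hasFDerivAt.comp_hasDerivAt t h

private lemma normSqDeriv {E : Type*} [NormedAddCommGroup E] [InnerProductSpace ℝ E]
    {f : ℝ → E} {f' : E} {t : ℝ} (h : HasDerivAt f f' t) :
    HasDerivAt (fun s => ‖f s‖ ^ 2) (2 * ⟪f t, f'⟫_ℝ) t := by
  have h2 := h.inner ℝ h
  simp only [real_inner_self_eq_norm_sq] at h2
  exact h2.congr_deriv (by rw [real_inner_comm]; ring)

private lemma norm5 (v : EuclideanSpace ℝ (Fin 5)) :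
    ‖v‖ ^ 2 = v 0 ^ 2 + v 1 ^ 2 + v 2 ^ 2 + v 3 ^ 2 + v 4 ^ 2 := by
  rw [← real_inner_self_eq_norm_sq]
  simp only [PiLp.inner_apply, Fin.sum_univ_five, RCLike.inner_apply, conj_trivial]; ring

private lemma norm4 (v : EuclideanSpace ℝ (Fin 4)) :
    ‖v‖ ^ 2 = v 0 ^ 2 + v 1 ^ 2 + v 2 ^ 2 + v 3 ^ 2 := by
  rw [← real_inner_self_eq_norm_sq]
  simp only [PiLp.inner_apply, Fin.sum_univ_four, RCLike.inner_apply, conj_trivial]; ring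

private lemma inner4 (v w : EuclideanSpace ℝ (Fin 4)) :
    ⟪v, w⟫_ℝ = v 0 * w 0 + v 1 * w 1 + v 2 * w 2 + v 3 * w 3 := by
  simp [PiLp.inner_apply, Fin.sum_univ_four]; ring

private lemma innerE (e : EuclideanSpace ℝ (Fin 3)) (v : EuclideanSpace ℝ (Fin 4)) :
    ⟪v, Eop e v⟫_ℝ = 0 := by
  simp [Eop, PiLp.inner_apply, Fin.sum_univ_four, PiLp.toLp_apply]
  ring

private lemma xcomp_deriv {u u' : ℝ → EuclideanSpace ℝ (Fin 4)} {r r' : ℝ → ℝ} {t : ℝ}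
    (hu : HasDerivAt u (u' t) t) (hr : HasDerivAt r (r' t) t) (i : Fin 4) :
    HasDerivAt (fun τ => 2 * r τ * u τ i / (‖u τ‖ ^ 2 + 1))
      (((2 * r' t * u t i + 2 * r t * u' t i) * (‖u t‖ ^ 2 + 1)
          - 2 * r t * u t i * (2 * ⟪u t, u' t⟫_ℝ)) / (‖u t‖ ^ 2 + 1) ^ 2) t := by
  have hden : HasDerivAt (fun τ => ‖u τ‖ ^ 2 + 1) (2 * ⟪u t, u' t⟫_ℝ) t :=
    (normSqDeriv hu).add_const 1
  have hnum : HasDerivAt (fun τ => 2 * r τ * u τ i)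
      (2 * r' t * u t i + 2 * r t * u' t i) t := by
    have := ((hr.const_mul (2:ℝ)).mul (euclProj hu i))
    exact this
  have hne : ‖u t‖ ^ 2 + 1 ≠ 0 := by positivity
  exact hnum.div hden hne

private lemma xcomp5_deriv {u u' : ℝ → EuclideanSpace ℝ (Fin 4)} {r r' : ℝ → ℝ} {t : ℝ}
    (hu : HasDerivAt u (u' t) t) (hr : HasDerivAt r (r' t) t) :
    HasDerivAt (fun τ => r τ * (‖u τ‖ ^ 2 - 1) / (‖u τ‖ ^ 2 + 1))
      (((r' t * (‖u t‖ ^ 2 - 1) + r t * (2 * ⟪u t, u' t⟫_ℝ)) * (‖u t‖ ^ 2 + 1)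
          - r t * (‖u t‖ ^ 2 - 1) * (2 * ⟪u t, u' t⟫_ℝ)) / (‖u t‖ ^ 2 + 1) ^ 2) t := by
  have hden : HasDerivAt (fun τ => ‖u τ‖ ^ 2 + 1) (2 * ⟪u t, u' t⟫_ℝ) t :=
    (normSqDeriv hu).add_const 1
  have hnum : HasDerivAt (fun τ => r τ * (‖u τ‖ ^ 2 - 1))
      (r' t * (‖u t‖ ^ 2 - 1) + r t * (2 * ⟪u t, u' t⟫_ℝ)) t := by
    have := hr.mul ((normSqDeriv hu).sub_const 1)
    exact this
  have hne : ‖u t‖ ^ 2 + 1 ≠ 0 := by positivity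
  exact hnum.div hden hne

set_option maxHeartbeats 4000000 in
/-- For a solution `(u, r, e)` of the Yang monopole equations of motion
on an open interval `I`, with position curve `x` (with derivatives `x'`, `x''` on `I`),
the acceleration satisfies `⟨ẍ(t), x(t)⟩ = 0` and `⟨ẍ(t), ẋ(t)⟩ = 0` for all `t ∈ I`;
in particular the speed `|ẋ(t)|` is constant on `I`. -/
theorem yang_acceleration_orthogonal
    (I : Set ℝ) (hIopen : IsOpen I) (hIconn : I.OrdConnected)
    (u u' u'' : ℝ → EuclideanSpace ℝ (Fin 4))
    (r r' r'' : ℝ → ℝ)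
    (e e' : ℝ → EuclideanSpace ℝ (Fin 3))
    (hsol : IsYangSolution I u u' u'' r r' r'' e e')
    (x x' x'' : ℝ → EuclideanSpace ℝ (Fin 5))
    (hx : ∀ t, x t = yangX (u t) (r t))
    (hx1 : ∀ t ∈ I, HasDerivAt x (x' t) t)
    (hx2 : ∀ t ∈ I, HasDerivAt x' (x'' t) t) :
    (∀ t ∈ I, ⟪x'' t, x t⟫_ℝ = 0 ∧ ⟪x'' t, x' t⟫_ℝ = 0) ∧
      (∀ s ∈ I, ∀ t ∈ I, ‖x' s‖ = ‖x' t‖) := by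
  obtain ⟨hu, hu', hu''c, hr, hr', hr''c, he, he'c, hrpos, heq1, heq2, heq3⟩ := hsol
  have hnz : ∀ v : EuclideanSpace ℝ (Fin 4), ‖v‖ ^ 2 + 1 ≠ 0 := fun v => by positivity
  -- components of x
  have hx0 : ∀ τ, x τ 0 = 2 * r τ * u τ 0 / (‖u τ‖ ^ 2 + 1) := fun τ => by
    rw [hx]; simp [yangX, PiLp.toLp_apply]
  have hx1c : ∀ τ, x τ 1 = 2 * r τ * u τ 1 / (‖u τ‖ ^ 2 + 1) := fun τ => by
    rw [hx]; simp [yangX, PiLp.toLp_apply]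
  have hx2c : ∀ τ, x τ 2 = 2 * r τ * u τ 2 / (‖u τ‖ ^ 2 + 1) := fun τ => by
    rw [hx]; simp [yangX, PiLp.toLp_apply]
  have hx3c : ∀ τ, x τ 3 = 2 * r τ * u τ 3 / (‖u τ‖ ^ 2 + 1) := fun τ => by
    rw [hx]; simp [yangX, PiLp.toLp_apply]
  have hx4c : ∀ τ, x τ 4 = r τ * (‖u τ‖ ^ 2 - 1) / (‖u τ‖ ^ 2 + 1) := fun τ => by
    rw [hx]; simp [yangX, PiLp.toLp_apply]
  -- ‖x τ‖² = r τ²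
  have hxnorm : ∀ τ, ‖x τ‖ ^ 2 = r τ ^ 2 := by
    intro τ
    rw [norm5, hx0, hx1c, hx2c, hx3c, hx4c, norm4 (u τ)]
    have hne : u τ 0 ^ 2 + u τ 1 ^ 2 + u τ 2 ^ 2 + u τ 3 ^ 2 + (1:ℝ) ≠ 0 := by positivity
    field_simp
    ring
  -- components of x' on I
  have hx'0 : ∀ t ∈ I, x' t 0 =
      ((2 * r' t * u t 0 + 2 * r t * u' t 0) * (‖u t‖ ^ 2 + 1)
        - 2 * r t * u t 0 * (2 * ⟪u t, u' t⟫_ℝ)) / (‖u t‖ ^ 2 + 1) ^ 2 := by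
    intro t ht
    have hd := xcomp_deriv (hu t ht) (hr t ht) 0
    rw [show (fun τ => 2 * r τ * u τ 0 / (‖u τ‖ ^ 2 + 1)) = fun τ => x τ 0 from
      funext fun τ => (hx0 τ).symm] at hd
    exact (euclProj (hx1 t ht) 0).unique hd
  have hx'1 : ∀ t ∈ I, x' t 1 =
      ((2 * r' t * u t 1 + 2 * r t * u' t 1) * (‖u t‖ ^ 2 + 1)
        - 2 * r t * u t 1 * (2 * ⟪u t, u' t⟫_ℝ)) / (‖u t‖ ^ 2 + 1) ^ 2 := by
    intro t ht
    have hd := xcomp_deriv (hu t ht) (hr t ht) 1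
    rw [show (fun τ => 2 * r τ * u τ 1 / (‖u τ‖ ^ 2 + 1)) = fun τ => x τ 1 from
      funext fun τ => (hx1c τ).symm] at hd
    exact (euclProj (hx1 t ht) 1).unique hd
  have hx'2 : ∀ t ∈ I, x' t 2 =
      ((2 * r' t * u t 2 + 2 * r t * u' t 2) * (‖u t‖ ^ 2 + 1)
        - 2 * r t * u t 2 * (2 * ⟪u t, u' t⟫_ℝ)) / (‖u t‖ ^ 2 + 1) ^ 2 := by
    intro t ht
    have hd := xcomp_deriv (hu t ht) (hr t ht) 2
    rw [show (fun τ => 2 * r τ * u τ 2 / (‖u τ‖ ^ 2 + 1)) = fun τ => x τ 2 from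
      funext fun τ => (hx2c τ).symm] at hd
    exact (euclProj (hx1 t ht) 2).unique hd
  have hx'3 : ∀ t ∈ I, x' t 3 =
      ((2 * r' t * u t 3 + 2 * r t * u' t 3) * (‖u t‖ ^ 2 + 1)
        - 2 * r t * u t 3 * (2 * ⟪u t, u' t⟫_ℝ)) / (‖u t‖ ^ 2 + 1) ^ 2 := by
    intro t ht
    have hd := xcomp_deriv (hu t ht) (hr t ht) 3
    rw [show (fun τ => 2 * r τ * u τ 3 / (‖u τ‖ ^ 2 + 1)) = fun τ => x τ 3 from
      funext fun τ => (hx3c τ).symm] at hd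
    exact (euclProj (hx1 t ht) 3).unique hd
  have hx'4 : ∀ t ∈ I, x' t 4 =
      ((r' t * (‖u t‖ ^ 2 - 1) + r t * (2 * ⟪u t, u' t⟫_ℝ)) * (‖u t‖ ^ 2 + 1)
        - r t * (‖u t‖ ^ 2 - 1) * (2 * ⟪u t, u' t⟫_ℝ)) / (‖u t‖ ^ 2 + 1) ^ 2 := by
    intro t ht
    have hd := xcomp5_deriv (hu t ht) (hr t ht)
    rw [show (fun τ => r τ * (‖u τ‖ ^ 2 - 1) / (‖u τ‖ ^ 2 + 1)) = fun τ => x τ 4 from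
      funext fun τ => (hx4c τ).symm] at hd
    exact (euclProj (hx1 t ht) 4).unique hd
  -- ‖x' t‖² = r'² + 4 r² ‖u'‖²/(‖u‖²+1)² on I
  have hxpnorm : ∀ t ∈ I, ‖x' t‖ ^ 2
      = r' t ^ 2 + 4 * r t ^ 2 * ‖u' t‖ ^ 2 / (‖u t‖ ^ 2 + 1) ^ 2 := by
    intro t ht
    rw [norm5, hx'0 t ht, hx'1 t ht, hx'2 t ht, hx'3 t ht, hx'4 t ht,
      norm4 (u t), norm4 (u' t), inner4 (u t) (u' t)]
    have hne : u t 0 ^ 2 + u t 1 ^ 2 + u t 2 ^ 2 + u t 3 ^ 2 + (1:ℝ) ≠ 0 := by positivity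
    field_simp
    ring
  -- ⟪x, x'⟫ = r r' on I
  have hxx' : ∀ t ∈ I, ⟪x t, x' t⟫_ℝ = r t * r' t := by
    intro t ht
    have hA : HasDerivAt (fun τ => ‖x τ‖ ^ 2) (2 * ⟪x t, x' t⟫_ℝ) t := normSqDeriv (hx1 t ht)
    have hB : HasDerivAt (fun τ => ‖x τ‖ ^ 2) (2 * (r t * r' t)) t := by
      have h1 : HasDerivAt (fun τ => r τ ^ 2) (2 * (r t * r' t)) t := by
        have := (hr t ht).pow 2
        exact this.congr_deriv (by ring)
      rw [show (fun τ => ‖x τ‖ ^ 2) = fun τ => r τ ^ 2 from funext hxnorm]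
      exact h1
    have := hA.unique hB
    linarith
  -- ⟪x, x''⟫ + ‖x'‖² = r'² + r r'' on I
  have hxx'' : ∀ t ∈ I, ⟪x t, x'' t⟫_ℝ + ‖x' t‖ ^ 2 = r' t ^ 2 + r t * r'' t := by
    intro t ht
    have hA : HasDerivAt (fun τ => ⟪x τ, x' τ⟫_ℝ) (⟪x t, x'' t⟫_ℝ + ⟪x' t, x' t⟫_ℝ) t :=
      (hx1 t ht).inner ℝ (hx2 t ht)
    have hEv : (fun τ => ⟪x τ, x' τ⟫_ℝ) =ᶠ[nhds t] fun τ => r τ * r' τ := by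
      filter_upwards [hIopen.mem_nhds ht] with τ hτ using hxx' τ hτ
    have hB : HasDerivAt (fun τ => ⟪x τ, x' τ⟫_ℝ) (r' t * r' t + r t * r'' t) t :=
      ((hr t ht).mul (hr' t ht)).congr_of_eventuallyEq hEv
    have huniq := hA.unique hB
    rw [real_inner_self_eq_norm_sq] at huniq
    linarith
  -- Goal 1: ⟪x'', x⟫ = 0 on I
  have key1 : ∀ t ∈ I, ⟪x'' t, x t⟫_ℝ = 0 := by
    intro t ht
    rw [real_inner_comm]
    have h7 := hxx'' t ht
    have h8 := hxpnorm t ht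
    have h2 := heq2 t ht
    have hrn : r t * r'' t = 4 * r t ^ 2 * ‖u' t‖ ^ 2 / (‖u t‖ ^ 2 + 1) ^ 2 := by
      rw [h2]; ring
    linarith
  -- ⟪u', u''⟫ from the equation of motion
  have hBW : ∀ t ∈ I, ⟪u' t, u'' t⟫_ℝ
      = -(2 * ‖u' t‖ ^ 2 / (‖u t‖ ^ 2 + 1)) * ⟪u t, u' t⟫_ℝ
        + (4 * ⟪u t, u' t⟫_ℝ / (‖u t‖ ^ 2 + 1)) * ‖u' t‖ ^ 2
        - (2 * r' t / r t) * ‖u' t‖ ^ 2 := by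
    intro t ht
    have h1 := congrArg (fun v => ⟪u' t, v⟫_ℝ) (heq1 t ht)
    simp only [inner_add_right, inner_sub_right, real_inner_smul_right] at h1
    rw [innerE, real_inner_self_eq_norm_sq, real_inner_comm (u t) (u' t)] at h1
    rw [mul_zero] at h1
    linarith
  -- Goal 2: ⟪x', x''⟫ = 0 on I
  have key2 : ∀ t ∈ I, ⟪x' t, x'' t⟫_ℝ = 0 := by
    intro t ht
    have hφ : HasDerivAt (fun τ => ‖x' τ‖ ^ 2) (2 * ⟪x' t, x'' t⟫_ℝ) t := normSqDeriv (hx2 t ht)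
    -- derivative of the explicit formula
    have hSd : HasDerivAt (fun τ => ‖u' τ‖ ^ 2) (2 * ⟪u' t, u'' t⟫_ℝ) t :=
      normSqDeriv (hu' t ht)
    have hNd : HasDerivAt (fun τ => (‖u τ‖ ^ 2 + 1) ^ 2)
        ((2:ℕ) * (‖u t‖ ^ 2 + 1) ^ 1 * (2 * ⟪u t, u' t⟫_ℝ)) t :=
      ((normSqDeriv (hu t ht)).add_const 1).pow 2
    have hnum : HasDerivAt (fun τ => 4 * r τ ^ 2 * ‖u' τ‖ ^ 2)
        (4 * ((2:ℕ) * r t ^ 1 * r' t) * ‖u' t‖ ^ 2 + 4 * r t ^ 2 * (2 * ⟪u' t, u'' t⟫_ℝ)) t := by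
      exact (((hr t ht).pow 2).const_mul (4:ℝ)).mul hSd
    have hne2 : (‖u t‖ ^ 2 + 1) ^ 2 ≠ 0 := pow_ne_zero 2 (hnz (u t))
    have hfrac := hnum.div hNd hne2
    have hr2d : HasDerivAt (fun τ => r' τ ^ 2) ((2:ℕ) * r' t ^ 1 * r'' t) t := (hr' t ht).pow 2
    have hψ := hr2d.add hfrac
    have hEv : (fun τ => ‖x' τ‖ ^ 2)
        =ᶠ[nhds t] fun τ => r' τ ^ 2 + 4 * r τ ^ 2 * ‖u' τ‖ ^ 2 / (‖u τ‖ ^ 2 + 1) ^ 2 := by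
      filter_upwards [hIopen.mem_nhds ht] with τ hτ using hxpnorm τ hτ
    have hψ' : HasDerivAt (fun τ => ‖x' τ‖ ^ 2)
        ((2:ℕ) * r' t ^ 1 * r'' t
          + ((4 * ((2:ℕ) * r t ^ 1 * r' t) * ‖u' t‖ ^ 2 + 4 * r t ^ 2 * (2 * ⟪u' t, u'' t⟫_ℝ))
              * (‖u t‖ ^ 2 + 1) ^ 2
            - 4 * r t ^ 2 * ‖u' t‖ ^ 2 * ((2:ℕ) * (‖u t‖ ^ 2 + 1) ^ 1 * (2 * ⟪u t, u' t⟫_ℝ)))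
            / ((‖u t‖ ^ 2 + 1) ^ 2) ^ 2) t :=
      hψ.congr_of_eventuallyEq hEv
    have huniq := hφ.unique hψ'
    have hR0 : r t ≠ 0 := ne_of_gt (hrpos t ht)
    have hN0 : ‖u t‖ ^ 2 + 1 ≠ 0 := hnz (u t)
    have h0 : 2 * ⟪x' t, x'' t⟫_ℝ = 0 := by
      rw [huniq, hBW t ht, heq2 t ht]
      set N := ‖u t‖ ^ 2 + 1 with hNdef
      set S := ‖u' t‖ ^ 2 with hSdef
      set C := ⟪u t, u' t⟫_ℝ with hCdef
      clear_value N S C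
      field_simp
      ring
    linarith only [h0]
  refine ⟨fun t ht => ⟨key1 t ht, by rw [real_inner_comm]; exact key2 t ht⟩, ?_⟩
  -- constancy of the speed
  have hφ0 : ∀ t ∈ I, HasDerivAt (fun τ => ‖x' τ‖ ^ 2) 0 t := by
    intro t ht
    have h := normSqDeriv (hx2 t ht)
    rw [key2 t ht, mul_zero] at h
    exact h
  have hconv : Convex ℝ I := convex_iff_ordConnected.mpr hIconn
  have hconst : ∀ s ∈ I, ∀ t ∈ I, ‖x' s‖ ^ 2 = ‖x' t‖ ^ 2 := by
    intro s hs t ht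
    refine hconv.is_const_of_fderivWithin_eq_zero (𝕜 := ℝ)
      (fun τ hτ => ((hφ0 τ hτ).differentiableAt).differentiableWithinAt) ?_ hs ht
    intro τ hτ
    rw [fderivWithin_of_isOpen hIopen hτ, (hφ0 τ hτ).hasFDerivAt.fderiv]
    ext
    simp
  intro s hs t ht
  have h := hconst s hs t ht
  have := congrArg Real.sqrt h
  rwa [Real.sqrt_sq (norm_nonneg _), Real.sqrt_sq (norm_nonneg _)] at this

end
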